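/- arXiv:0804.3638 — 5 statements merged into one kernel-verified Lean document; each statement's English description precedes it below -/
import Mathlib

section
/- For every positive integer n, the sum over all binary trees T with n vertices of the product, over all vertices v of T, of 1/(h_v · 2^{h_v - 1}) equals 1/n!, where h_v denotes the hook length of v in T. -/
/-- The product over all vertices `v` of a binary tree of `f h_v`, where `h_v` is the
hook length of `v`, i.e. the number of vertices of the subtree rooted at `v`. -/
def hookProd (f : ℕ → ℚ) : Tree Unit → ℚ
  | BinaryTree.nil => 1
  | BinaryTree.node _ l r =>
      f (l.numNodes + r.numNodes + 1) * hookProd f l * hookProd f r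

lemma sum_antidiagonal_inv_factorial (m : ℕ) :
    ∑ ij ∈ Finset.HasAntidiagonal.antidiagonal m,
      (1 / (ij.1.factorial : ℚ)) * (1 / (ij.2.factorial : ℚ)) =
      2 ^ m / (m.factorial : ℚ) := by
  rw [Finset.Nat.sum_antidiagonal_eq_sum_range_succ (f := fun i j =>
    (1 / (i.factorial : ℚ)) * (1 / (j.factorial : ℚ)))]
  have h2 : ((2 ^ m : ℕ) : ℚ) = ∑ i ∈ Finset.range (m + 1), (m.choose i : ℚ) := by
    rw [← Nat.sum_range_choose m]; push_cast; ring
  have hm : (m.factorial : ℚ) ≠ 0 := Nat.cast_ne_zero.mpr m.factorial_ne_zero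
  rw [eq_div_iff hm]
  push_cast at h2
  rw [h2, Finset.sum_mul]
  refine Finset.sum_congr rfl fun i hi => ?_
  have hle : i ≤ m := Nat.lt_succ_iff.mp (Finset.mem_range.mp hi)
  rw [← Nat.choose_mul_factorial_mul_factorial hle]
  have h1 : ((i.factorial : ℚ)) ≠ 0 := Nat.cast_ne_zero.mpr i.factorial_ne_zero
  have h3 : (((m - i).factorial : ℚ)) ≠ 0 := Nat.cast_ne_zero.mpr (m - i).factorial_ne_zero
  push_cast
  field_simp

lemma han_aux (n : ℕ) :
    ∑ T ∈ Tree.treesOfNumNodesEq n,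
      hookProd (fun h => 1 / ((h : ℚ) * 2 ^ (h - 1))) T = 1 / (n.factorial : ℚ) := by
  induction n using Nat.strong_induction_on with
  | _ n ih =>
    match n with
    | 0 => simp [hookProd]
    | n + 1 =>
      rw [Tree.treesOfNumNodesEq, BinaryTree.treesOfNumNodesEq_succ, Finset.sum_biUnion]
      · have key : ∀ ij ∈ Finset.HasAntidiagonal.antidiagonal n,
            ∑ T ∈ BinaryTree.pairwiseNode (Tree.treesOfNumNodesEq ij.1)
                (Tree.treesOfNumNodesEq ij.2),
              hookProd (fun h => 1 / ((h : ℚ) * 2 ^ (h - 1))) T =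
            (1 / (((n : ℚ) + 1) * 2 ^ n)) *
              ((1 / (ij.1.factorial : ℚ)) * (1 / (ij.2.factorial : ℚ))) := by
          rintro ⟨i, j⟩ hij
          have hij' : i + j = n := Finset.HasAntidiagonal.mem_antidiagonal.mp hij
          rw [Finset.sum_map, Finset.sum_product]
          have : ∀ l ∈ Tree.treesOfNumNodesEq i, ∀ r ∈ Tree.treesOfNumNodesEq j,
              hookProd (fun h => 1 / ((h : ℚ) * 2 ^ (h - 1))) (Tree.node () l r) =
              (1 / (((n : ℚ) + 1) * 2 ^ n)) *
                (hookProd (fun h => 1 / ((h : ℚ) * 2 ^ (h - 1))) l *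
                 hookProd (fun h => 1 / ((h : ℚ) * 2 ^ (h - 1))) r) := by
            intro l hl r hr
            have hl' : BinaryTree.numNodes l = i := BinaryTree.mem_treesOfNumNodesEq.mp hl
            have hr' : BinaryTree.numNodes r = j := BinaryTree.mem_treesOfNumNodesEq.mp hr
            show hookProd _ (Tree.node () l r) = _
            rw [hookProd, hl', hr', hij']
            push_cast
            ring
          calc ∑ l ∈ Tree.treesOfNumNodesEq i, ∑ r ∈ Tree.treesOfNumNodesEq j,
                hookProd (fun h => 1 / ((h : ℚ) * 2 ^ (h - 1))) (Tree.node () l r)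
              = ∑ l ∈ Tree.treesOfNumNodesEq i, ∑ r ∈ Tree.treesOfNumNodesEq j,
                (1 / (((n : ℚ) + 1) * 2 ^ n)) *
                  (hookProd (fun h => 1 / ((h : ℚ) * 2 ^ (h - 1))) l *
                   hookProd (fun h => 1 / ((h : ℚ) * 2 ^ (h - 1))) r) := by
                refine Finset.sum_congr rfl fun l hl => Finset.sum_congr rfl fun r hr => ?_
                exact this l hl r hr
            _ = (1 / (((n : ℚ) + 1) * 2 ^ n)) *
                  ((1 / (i.factorial : ℚ)) * (1 / (j.factorial : ℚ))) := by
                have hi : i < n + 1 := Nat.lt_succ_of_le (Finset.HasAntidiagonal.antidiagonal.fst_le hij)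
                have hj : j < n + 1 := Nat.lt_succ_of_le (Finset.HasAntidiagonal.antidiagonal.snd_le hij)
                simp_rw [← Finset.mul_sum, ← Finset.sum_mul]
                rw [ih i hi, ih j hj]
        rw [Finset.sum_congr rfl key, ← Finset.mul_sum, sum_antidiagonal_inv_factorial]
        have h2 : ((2 : ℚ) ^ n) ≠ 0 := by positivity
        have hn1 : ((n : ℚ) + 1) ≠ 0 := by positivity
        have hf : (n.factorial : ℚ) ≠ 0 := Nat.cast_ne_zero.mpr n.factorial_ne_zero
        rw [Nat.factorial_succ]
        push_cast
        field_simp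
      · intro ij hij ij' hij' h
        simp only [Function.onFun]
        rw [Finset.disjoint_left]
        obtain ⟨i, j⟩ := ij; obtain ⟨i', j'⟩ := ij'
        intro a ha ha'
        revert h
        rintro h
        simp only [BinaryTree.pairwiseNode, Finset.mem_map, Finset.mem_product,
          Function.Embedding.coeFn_mk, Prod.exists] at ha ha'
        obtain ⟨l, r, ⟨hl, hr⟩, rfl⟩ := ha
        obtain ⟨l', r', ⟨hl', hr'⟩, heq⟩ := ha'
        cases heq
        exact h (by
          rw [BinaryTree.mem_treesOfNumNodesEq] at hl hr hl' hr'
          simp [Prod.ext_iff, ← hl, ← hr, ← hl', ← hr'])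

theorem han_formula_one (n : ℕ) (hn : 0 < n) :
    ∑ T ∈ Tree.treesOfNumNodesEq n,
      hookProd (fun h => 1 / ((h : ℚ) * 2 ^ (h - 1))) T = 1 / (n.factorial : ℚ) := by
  exact han_aux n
end

section
/- For every positive integer n, the sum over all binary trees T with n vertices of the product, over all vertices v of T, of 1/((2h_v + 1) · 2^{2h_v - 1}) equals 1/(2n + 1)!, where h_v denotes the hook length of v in T. -/
open Finset Nat
open Finset Nat

lemma odd_choose_sum (m : ℕ) :
    ∑ k ∈ range (m + 1), ((2 * m + 2).choose (2 * k + 1) : ℚ) = 2 ^ (2 * m + 1) := by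
  have h1 : ∑ i ∈ range (2 * m + 2 + 1), ((2 * m + 2).choose i : ℚ) = 2 ^ (2 * m + 2) := by
    exact_mod_cast congrArg (Nat.cast : ℕ → ℚ) (Nat.sum_range_choose (2 * m + 2))
  have h2 : ∑ i ∈ range (2 * m + 2 + 1), (-1 : ℚ) ^ i * ((2 * m + 2).choose i : ℚ) = 0 := by
    have := Int.alternating_sum_range_choose_of_ne (n := 2 * m + 2) (by omega)
    exact_mod_cast congrArg (Int.cast : ℤ → ℚ) this
  have h3 : ∑ i ∈ range (2 * m + 2 + 1),
      (1 - (-1 : ℚ) ^ i) * ((2 * m + 2).choose i : ℚ) = 2 ^ (2 * m + 2) := by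
    simp only [sub_mul, one_mul, Finset.sum_sub_distrib, h1, h2, sub_zero]
  have hfil : (range (2 * m + 2 + 1)).filter (fun i => ¬ Even i)
      = (range (m + 1)).image (fun k => 2 * k + 1) := by
    ext i
    simp only [mem_filter, mem_range, mem_image, Nat.even_iff]
    constructor
    · rintro ⟨hi, hodd⟩
      exact ⟨i / 2, by omega, by omega⟩
    · rintro ⟨k, hk, rfl⟩
      omega
  have h4 : ∑ i ∈ range (2 * m + 2 + 1),
      (1 - (-1 : ℚ) ^ i) * ((2 * m + 2).choose i : ℚ)
      = ∑ k ∈ range (m + 1), 2 * ((2 * m + 2).choose (2 * k + 1) : ℚ) := by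
    rw [← Finset.sum_filter_add_sum_filter_not (range (2 * m + 2 + 1)) (fun i => Even i)]
    have he : ∑ i ∈ (range (2 * m + 2 + 1)).filter (fun i => Even i),
        (1 - (-1 : ℚ) ^ i) * ((2 * m + 2).choose i : ℚ) = 0 := by
      apply Finset.sum_eq_zero
      intro i hi
      rw [mem_filter] at hi
      rw [hi.2.neg_one_pow]
      ring
    rw [he, zero_add, hfil, Finset.sum_image (by intro a _ b _ h; simp only at h; omega)]
    apply Finset.sum_congr rfl
    intro k _
    rw [Odd.neg_one_pow ⟨k, by ring⟩]
    ring
  have := h3.symm.trans h4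
  rw [← Finset.mul_sum] at this
  have h2' : (2 : ℚ) ^ (2 * m + 2) = 2 * 2 ^ (2 * m + 1) := by ring
  rw [h2'] at this
  exact (mul_left_cancel₀ (by norm_num) this).symm

lemma conv_identity (n : ℕ) :
    ∑ ij ∈ Finset.HasAntidiagonal.antidiagonal n,
      (1 / ((2 * ij.1 + 1).factorial : ℚ)) * (1 / ((2 * ij.2 + 1).factorial : ℚ))
      = 2 ^ (2 * n + 1) / ((2 * n + 2).factorial : ℚ) := by
  have key : ∀ ij ∈ Finset.HasAntidiagonal.antidiagonal n,
      (1 / ((2 * ij.1 + 1).factorial : ℚ)) * (1 / ((2 * ij.2 + 1).factorial : ℚ))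
      = ((2 * n + 2).choose (2 * ij.1 + 1) : ℚ) / ((2 * n + 2).factorial : ℚ) := by
    rintro ⟨i, j⟩ hij
    rw [Finset.HasAntidiagonal.mem_antidiagonal] at hij
    simp only
    have hsum : (2 * j + 1) + (2 * i + 1) = 2 * n + 2 := by omega
    have hfact := Nat.add_choose_mul_factorial_mul_factorial (2 * j + 1) (2 * i + 1)
    rw [hsum] at hfact
    have hq : (((2 * n + 2).choose (2 * i + 1) : ℚ)) * ((2 * j + 1).factorial : ℚ)
        * ((2 * i + 1).factorial : ℚ) = ((2 * n + 2).factorial : ℚ) := by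
      exact_mod_cast congrArg (Nat.cast : ℕ → ℚ) hfact
    have f1 : ((2 * i + 1).factorial : ℚ) ≠ 0 := Nat.cast_ne_zero.mpr (Nat.factorial_ne_zero _)
    have f2 : ((2 * j + 1).factorial : ℚ) ≠ 0 := Nat.cast_ne_zero.mpr (Nat.factorial_ne_zero _)
    have f3 : ((2 * n + 2).factorial : ℚ) ≠ 0 := Nat.cast_ne_zero.mpr (Nat.factorial_ne_zero _)
    field_simp
    linarith [hq]
  rw [Finset.sum_congr rfl key, Finset.Nat.sum_antidiagonal_eq_sum_range_succ_mk]
  rw [← Finset.sum_div]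
  congr 1
  exact odd_choose_sum n


lemma sum_hookProd (n : ℕ) :
    ∑ T ∈ BinaryTree.treesOfNumNodesEq n,
      hookProd (fun h => 1 / ((2 * h + 1 : ℚ) * 2 ^ (2 * h - 1))) T
      = 1 / ((2 * n + 1).factorial : ℚ) := by
  set f : ℕ → ℚ := fun h => 1 / ((2 * h + 1 : ℚ) * 2 ^ (2 * h - 1)) with hf
  induction n using Nat.strong_induction_on with
  | _ n ih =>
    rcases n with _ | n
    · simp [hookProd]
    · have hdisj : Set.PairwiseDisjoint ↑(Finset.HasAntidiagonal.antidiagonal n)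
          (fun ij : ℕ × ℕ =>
            BinaryTree.pairwiseNode (BinaryTree.treesOfNumNodesEq ij.1) (BinaryTree.treesOfNumNodesEq ij.2)) := by
        rintro ⟨i, j⟩ _ ⟨i', j'⟩ _ h
        rw [Function.onFun, Finset.disjoint_left]
        rintro x hx hy
        obtain ⟨⟨l, r⟩, hlr, rfl⟩ := Finset.mem_map.mp hx
        obtain ⟨⟨l', r'⟩, hlr', he⟩ := Finset.mem_map.mp hy
        replace he := BinaryTree.node.inj he
        obtain ⟨-, rfl, rfl⟩ := he
        rw [Finset.mem_product, BinaryTree.mem_treesOfNumNodesEq, BinaryTree.mem_treesOfNumNodesEq] at hlr hlr'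
        apply h
        ext
        · rw [← hlr.1, ← hlr'.1]
        · rw [← hlr.2, ← hlr'.2]
      rw [BinaryTree.treesOfNumNodesEq_succ, Finset.sum_biUnion hdisj]
      have step : ∀ ij ∈ Finset.HasAntidiagonal.antidiagonal n,
          ∑ T ∈ BinaryTree.pairwiseNode (BinaryTree.treesOfNumNodesEq ij.1) (BinaryTree.treesOfNumNodesEq ij.2),
            hookProd f T
          = f (n + 1) * ((1 / ((2 * ij.1 + 1).factorial : ℚ))
              * (1 / ((2 * ij.2 + 1).factorial : ℚ))) := by
        rintro ⟨i, j⟩ hij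
        rw [Finset.HasAntidiagonal.mem_antidiagonal] at hij
        simp only at hij ⊢
        rw [Finset.sum_map, Finset.sum_product]
        trans ∑ l ∈ BinaryTree.treesOfNumNodesEq i, ∑ r ∈ BinaryTree.treesOfNumNodesEq j,
            f (n + 1) * hookProd f l * hookProd f r
        · apply Finset.sum_congr rfl
          intro l hl
          apply Finset.sum_congr rfl
          intro r hr
          rw [BinaryTree.mem_treesOfNumNodesEq] at hl hr
          show hookProd f (BinaryTree.node () l r) = _
          simp only [hookProd]
          rw [hl, hr, hij]
        · rw [show (∑ l ∈ BinaryTree.treesOfNumNodesEq i, ∑ r ∈ BinaryTree.treesOfNumNodesEq j,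
              f (n + 1) * hookProd f l * hookProd f r)
              = f (n + 1) * ((∑ l ∈ BinaryTree.treesOfNumNodesEq i, hookProd f l)
                * (∑ r ∈ BinaryTree.treesOfNumNodesEq j, hookProd f r)) by
            simp only [Finset.mul_sum, Finset.sum_mul]
            rw [Finset.sum_comm]
            apply Finset.sum_congr rfl
            intro l _
            apply Finset.sum_congr rfl
            intro r _
            ring]
          rw [ih i (by omega), ih j (by omega)]
      rw [Finset.sum_congr rfl step, ← Finset.mul_sum, conv_identity]
      have hexp : 2 * (n + 1) - 1 = 2 * n + 1 := by omega
      have hfac : ((2 * (n + 1) + 1).factorial : ℚ)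
          = (2 * n + 3 : ℚ) * ((2 * n + 2).factorial : ℚ) := by
        have : 2 * (n + 1) + 1 = (2 * n + 2) + 1 := by ring
        rw [this, Nat.factorial_succ]
        push_cast
        ring
      rw [hf]
      simp only [hexp, hfac]
      have f3 : ((2 * n + 2).factorial : ℚ) ≠ 0 := Nat.cast_ne_zero.mpr (Nat.factorial_ne_zero _)
      have p2 : (2 : ℚ) ^ (2 * n + 1) ≠ 0 := by positivity
      have c3 : (2 * (n + 1) + 1 : ℚ) ≠ 0 := by positivity
      field_simp
      push_cast
      ring

theorem han_formula_two (n : ℕ) (hn : 0 < n) :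
    ∑ T ∈ Tree.treesOfNumNodesEq n,
      hookProd (fun h => 1 / ((2 * h + 1 : ℚ) * 2 ^ (2 * h - 1))) T
      = 1 / ((2 * n + 1).factorial : ℚ) := sum_hookProd n
end

section
/- If a function P from the nonnegative integers to the rationals satisfies P(0) = 1 and, for every positive integer n, P(n) = (1/(n · 2^{n-1})) · Σ_{k=0}^{n-1} P(k) · P(n-1-k), then P(n) = 1/n! for all n ≥ 0. -/
theorem P_solution (P : ℕ → ℚ) (h0 : P 0 = 1)
    (hrec : ∀ n : ℕ, 0 < n →
      P n = (1 / ((n : ℚ) * 2 ^ (n - 1))) *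
        ∑ k ∈ Finset.range n, P k * P (n - 1 - k)) :
    ∀ n : ℕ, P n = 1 / (n.factorial : ℚ) := by
  intro n
  induction n using Nat.strong_induction_on with
  | _ n ih =>
    match n with
    | 0 => simpa using h0
    | m + 1 =>
      rw [hrec (m + 1) (Nat.succ_pos m)]
      have hsum : ∑ k ∈ Finset.range (m + 1), P k * P (m + 1 - 1 - k)
          = ∑ k ∈ Finset.range (m + 1), ((m.choose k : ℚ)) / (m.factorial : ℚ) := by
        apply Finset.sum_congr rfl
        intro k hk
        rw [Finset.mem_range] at hk
        have hk' : k ≤ m := Nat.lt_succ_iff.mp hk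
        rw [ih k (by omega), ih (m + 1 - 1 - k) (by omega)]
        have h1 : m + 1 - 1 - k = m - k := by omega
        rw [h1]
        have hfac := Nat.choose_mul_factorial_mul_factorial hk'
        have hne1 : (k.factorial : ℚ) ≠ 0 := Nat.cast_ne_zero.mpr k.factorial_ne_zero
        have hne2 : ((m - k).factorial : ℚ) ≠ 0 := Nat.cast_ne_zero.mpr (m - k).factorial_ne_zero
        have hne3 : (m.factorial : ℚ) ≠ 0 := Nat.cast_ne_zero.mpr m.factorial_ne_zero
        have : (m.choose k : ℚ) * (k.factorial : ℚ) * ((m - k).factorial : ℚ)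
            = (m.factorial : ℚ) := by
          exact_mod_cast congrArg (Nat.cast : ℕ → ℚ) hfac
        field_simp
        linarith [this]
      rw [hsum, ← Finset.sum_div, ← Nat.cast_sum, Nat.sum_range_choose]
      have hne3 : (m.factorial : ℚ) ≠ 0 := Nat.cast_ne_zero.mpr m.factorial_ne_zero
      have h2 : ((2 : ℚ)) ^ (m + 1 - 1) = 2 ^ m := by norm_num
      rw [h2, Nat.factorial_succ]
      have h2ne : ((2 : ℚ)) ^ m ≠ 0 := pow_ne_zero _ two_ne_zero
      have hm1 : ((m : ℚ) + 1) ≠ 0 := by positivity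
      push_cast
      field_simp
end

section
/- For every positive integer n, the sum over all binary trees T with n vertices of (n!/2^n) · Π_{v ∈ T} (1 + 1/h_v) equals (n+1)^{n-1} (Postnikov's hook length formula). -/
section PostnikovAux
open Finset Tree Polynomial


lemma natDegree_shift_sub_lt (q : Polynomial ℚ) (h : q.natDegree ≠ 0) :
    (q.comp (X + 1) - q).natDegree < q.natDegree := by
  have hX1 : (X + 1 : ℚ[X]) = X + C 1 := by norm_num
  have hq0 : q ≠ 0 := fun h0 => h (by simp [h0])
  have hdeg : (q.comp (X + 1)).natDegree = q.natDegree := by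
    rw [natDegree_comp, hX1, natDegree_X_add_C, mul_one]
  have hc0 : q.comp (X + 1) ≠ 0 := by
    intro h0
    rw [h0] at hdeg; simp at hdeg; exact h hdeg.symm
  have hlc : (q.comp (X + 1)).leadingCoeff = q.leadingCoeff := by
    rw [hX1, leadingCoeff_comp (by rw [natDegree_X_add_C]; norm_num)]
    simp [hX1, leadingCoeff_X_add_C]
  by_cases hsub : q.comp (X + 1) - q = 0
  · rw [hsub]; simpa using Nat.pos_of_ne_zero h
  · have := degree_sub_lt (by rw [degree_eq_natDegree hc0, degree_eq_natDegree hq0, hdeg]) hc0 hlc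
    rw [degree_eq_natDegree hc0, hdeg] at this
    exact natDegree_lt_natDegree hsub (by rwa [← degree_eq_natDegree hq0] at this)

lemma fd : ∀ n : ℕ, ∀ q : Polynomial ℚ, q.natDegree < n →
    ∑ k ∈ range (n+1), (-1:ℚ)^k * (n.choose k) * q.eval (k:ℚ) = 0 := by
  intro n
  induction n with
  | zero => intro q h; omega
  | succ n ih =>
    intro q hq
    by_cases h0 : q.natDegree = 0
    · obtain ⟨c, rfl⟩ := natDegree_eq_zero.mp h0
      simp only [eval_C]
      rw [← sum_mul]
      have : ∑ k ∈ range (n+1+1), (-1:ℚ)^k * ((n+1).choose k) = 0 := by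
        have := Int.alternating_sum_range_choose (n := n+1)
        simp only [Nat.succ_ne_zero, if_false] at this
        exact_mod_cast congrArg (Int.cast : ℤ → ℚ) this
      rw [this, zero_mul]
    · set r := q.comp (X + 1) - q with hr
      have hrdeg : r.natDegree < n := lt_of_lt_of_le (natDegree_shift_sub_lt q h0) (by omega)
      have expand : ∀ k : ℕ, r.eval (k:ℚ) = q.eval ((k:ℚ)+1) - q.eval (k:ℚ) := by
        intro k; simp [hr]
      set A := ∑ j ∈ range (n+1), (-1:ℚ)^j * (n.choose j) * q.eval ((j:ℚ)+1) with hA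
      set B := ∑ j ∈ range (n+1), (-1:ℚ)^j * (n.choose j) * q.eval (j:ℚ) with hB
      have hBC : B = (∑ j ∈ range (n+1), (-1:ℚ)^(j+1) * (n.choose (j+1)) * q.eval ((j:ℚ)+1))
          + q.eval 0 := by
        have hext : B = ∑ j ∈ range (n+2), (-1:ℚ)^j * (n.choose j) * q.eval (j:ℚ) := by
          rw [Finset.sum_range_succ, Nat.choose_succ_self]
          simp [hB]
        rw [hext, Finset.sum_range_succ' _ (n+1)]
        simp only [Nat.cast_zero, pow_zero, Nat.choose_zero_right, Nat.cast_one, one_mul, mul_one]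
        congr 1
        refine Finset.sum_congr rfl fun j _ => ?_
        push_cast
        ring_nf
      have key : ∑ k ∈ range (n+1+1), (-1:ℚ)^k * ((n+1).choose k) * q.eval (k:ℚ)
          = B - A := by
        rw [Finset.sum_range_succ' _ (n+1)]
        simp only [Nat.cast_zero, pow_zero, Nat.choose_zero_right, Nat.cast_one, one_mul, mul_one]
        rw [hBC]
        have : ∀ j ∈ range (n+1), (-1:ℚ)^(j+1) * ((n+1).choose (j+1)) * q.eval (((j+1:ℕ)):ℚ)
            = -((-1:ℚ)^j * (n.choose j) * q.eval ((j:ℚ)+1))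
              + (-1:ℚ)^(j+1) * (n.choose (j+1)) * q.eval ((j:ℚ)+1) := by
          intro j _
          rw [Nat.choose_succ_succ]
          push_cast
          ring
        rw [Finset.sum_congr rfl this, sum_add_distrib, Finset.sum_neg_distrib, hA]
        ring
      have : A - B = 0 := by
        have := ih r hrdeg
        rw [Finset.sum_congr rfl (fun k _ => by rw [expand k])] at this
        calc A - B = ∑ k ∈ range (n+1), (-1:ℚ)^k * (n.choose k) * (q.eval ((k:ℚ)+1) - q.eval (k:ℚ)) := by
              rw [hA, hB, ← Finset.sum_sub_distrib]; congr 1; ext k; ring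
          _ = 0 := this
      rw [key]
      linarith


lemma abel : ∀ n : ℕ, ∀ y : ℚ,
    ∑ k ∈ range (n+1), (n.choose k : ℚ) * ((k:ℚ)+1)^(k-1) * (y + ((n-k : ℕ):ℚ))^(n-k)
      = (y + n + 1)^n := by
  intro n
  induction n with
  | zero => intro y; simp
  | succ n ih =>
    -- polynomials
    set p : Polynomial ℚ := ∑ k ∈ range (n+2),
      C (((n+1).choose k : ℚ) * ((k:ℚ)+1)^(k-1)) * (X + C (((n+1-k : ℕ):ℚ)))^(n+1-k) with hp
    set q : Polynomial ℚ := (X + C ((n:ℚ)+2))^(n+1) with hq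
    have evalp : ∀ y : ℚ, p.eval y = ∑ k ∈ range (n+2),
        (((n+1).choose k : ℚ) * ((k:ℚ)+1)^(k-1)) * (y + ((n+1-k : ℕ):ℚ))^(n+1-k) := by
      intro y
      rw [hp, eval_finset_sum]
      refine Finset.sum_congr rfl fun k _ => by simp
    have evalq : ∀ y : ℚ, q.eval y = (y + n + 2)^(n+1) := by
      intro y; rw [hq]; simp; ring_nf
    have hderiv : derivative p = derivative q := by
      apply Polynomial.funext
      intro y
      have dp : derivative p = ∑ k ∈ range (n+2),
          C (((n+1).choose k : ℚ) * ((k:ℚ)+1)^(k-1)) *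
            (C (((n+1-k : ℕ):ℚ)) * (X + C (((n+1-k : ℕ):ℚ)))^(n+1-k-1)) := by
        rw [hp, derivative_sum]
        refine Finset.sum_congr rfl fun k _ => ?_
        rw [derivative_C_mul, derivative_X_add_C_pow]
      have dq : derivative q = C ((n:ℚ)+2) * 0 + C (((n+1:ℕ):ℚ)) * (X + C ((n:ℚ)+2))^n := by
        rw [hq, derivative_X_add_C_pow]
        push_cast
        ring_nf
      rw [dp, dq]
      rw [eval_finset_sum]
      have term : ∀ k ∈ range (n+2),
          (C (((n+1).choose k : ℚ) * ((k:ℚ)+1)^(k-1)) *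
            (C (((n+1-k : ℕ):ℚ)) * (X + C (((n+1-k : ℕ):ℚ)))^(n+1-k-1))).eval y
          = (((n+1).choose k : ℚ) * ((k:ℚ)+1)^(k-1)) * ((n+1-k : ℕ):ℚ)
              * (y + ((n+1-k : ℕ):ℚ))^(n+1-k-1) := by
        intro k _
        simp [mul_assoc]
      rw [Finset.sum_congr rfl term]
      rw [Finset.sum_range_succ]
      simp only [Nat.sub_self, Nat.cast_zero, mul_zero, zero_mul, add_zero]
      have step : ∀ k ∈ range (n+1),
          (((n+1).choose k : ℚ) * ((k:ℚ)+1)^(k-1)) * ((n+1-k : ℕ):ℚ)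
              * (y + ((n+1-k : ℕ):ℚ))^(n+1-k-1)
          = ((n+1:ℕ):ℚ) * ((n.choose k : ℚ) * ((k:ℚ)+1)^(k-1) * ((y+1) + ((n-k : ℕ):ℚ))^(n-k)) := by
        intro k hk
        have hk' : k ≤ n := by simpa [Nat.lt_succ_iff] using hk
        have h1 : ((n+1-k : ℕ):ℚ) = ((n-k : ℕ):ℚ) + 1 := by
          have : n+1-k = (n-k)+1 := by omega
          rw [this]; push_cast; ring
        have h2 : n+1-k-1 = n-k := by omega
        have h3 : (((n+1).choose k : ℚ)) * ((n+1-k : ℕ):ℚ) = ((n+1:ℕ):ℚ) * (n.choose k : ℚ) := by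
          have h3n : (n+1).choose k * (n+1-k) = n.choose k * (n+1) := (Nat.choose_mul_succ_eq n k).symm
          have := congrArg (fun m : ℕ => (m : ℚ)) h3n
          push_cast at this
          rw [this]; push_cast; ring
        rw [h2, h1]
        calc (((n+1).choose k : ℚ) * ((k:ℚ)+1)^(k-1)) * (((n-k : ℕ):ℚ)+1)
              * (y + (((n-k : ℕ):ℚ)+1))^(n-k)
            = (((n+1).choose k : ℚ) * (((n-k : ℕ):ℚ)+1)) * (((k:ℚ)+1)^(k-1)
              * ((y+1) + ((n-k : ℕ):ℚ))^(n-k)) := by ring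
          _ = (((n+1:ℕ):ℚ) * (n.choose k : ℚ)) * (((k:ℚ)+1)^(k-1)
              * ((y+1) + ((n-k : ℕ):ℚ))^(n-k)) := by rw [← h1, h3]
          _ = ((n+1:ℕ):ℚ) * ((n.choose k : ℚ) * ((k:ℚ)+1)^(k-1) * ((y+1) + ((n-k : ℕ):ℚ))^(n-k)) := by ring
      rw [Finset.sum_congr rfl step, ← Finset.mul_sum, ih (y+1)]
      simp only [eval_add, eval_mul, eval_C, eval_pow, eval_X, mul_zero, zero_add]
      push_cast
      ring_nf
    have hconst : p - q = C ((p - q).coeff 0) := by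
      have : derivative (p - q) = 0 := by rw [derivative_sub, hderiv, sub_self]
      have hdeg : (p - q).natDegree = 0 := natDegree_eq_zero_of_derivative_eq_zero this
      exact (Polynomial.eq_C_of_natDegree_eq_zero hdeg)
    have heval0 : p.eval (-((n:ℚ)+2)) = 0 := by
      rw [evalp]
      have term : ∀ k ∈ range (n+2),
          (((n+1).choose k : ℚ) * ((k:ℚ)+1)^(k-1)) * ((-((n:ℚ)+2)) + ((n+1-k : ℕ):ℚ))^(n+1-k)
          = (-1:ℚ)^(n+1) * ((-1:ℚ)^k * (((n+1).choose k : ℚ)) * (((X:ℚ[X])+1)^n).eval (k:ℚ)) := by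
        intro k hk
        have hk' : k ≤ n+1 := by simpa [Nat.lt_succ_iff] using hk
        have h1 : (-((n:ℚ)+2)) + ((n+1-k : ℕ):ℚ) = -((k:ℚ)+1) := by
          have : ((n+1-k : ℕ):ℚ) = (n:ℚ)+1-(k:ℚ) := by
            push_cast [Nat.cast_sub (by omega : k ≤ n+1)]; ring
          rw [this]; push_cast; ring
        have h2 : ((k:ℚ)+1)^(k-1) * ((k:ℚ)+1)^(n+1-k) = ((k:ℚ)+1)^n := by
          rcases Nat.eq_zero_or_pos k with rfl | hkpos
          · norm_num
          · rw [← pow_add]; congr 1; omega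
        have h3 : (-1:ℚ)^(n+1-k) = (-1:ℚ)^(n+1) * (-1:ℚ)^k := by
          have : (-1:ℚ)^(n+1) = (-1:ℚ)^(n+1-k) * (-1:ℚ)^k := by
            rw [← pow_add]; congr 1; omega
          rw [this, mul_assoc, ← pow_add]
          simp [pow_add, mul_pow, ← two_mul, pow_mul]
        rw [h1, neg_pow, h3]
        simp only [eval_pow, eval_add, eval_X, eval_one]
        calc ((n+1).choose k : ℚ) * ((k:ℚ)+1)^(k-1) * ((-1:ℚ)^(n+1) * (-1:ℚ)^k * ((k:ℚ)+1)^(n+1-k))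
            = (-1:ℚ)^(n+1) * ((-1:ℚ)^k * (((n+1).choose k : ℚ)) *
                (((k:ℚ)+1)^(k-1) * ((k:ℚ)+1)^(n+1-k))) := by ring
          _ = _ := by rw [h2]
      rw [Finset.sum_congr rfl term, ← Finset.mul_sum]
      have := fd (n+1) ((X+1)^n) (by
        rw [show ((X:ℚ[X])+1) = X + C 1 by norm_num, natDegree_pow, natDegree_X_add_C, mul_one]
        omega)
      rw [this, mul_zero]
    have hevalq0 : q.eval (-((n:ℚ)+2)) = 0 := by
      rw [evalq, show (-((n:ℚ)+2) + (n:ℚ) + 2) = 0 by ring]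
      exact zero_pow (Nat.succ_ne_zero n)
    have hpq : p = q := by
      have hc : (p - q).coeff 0 = 0 := by
        have := congrArg (eval (-((n:ℚ)+2))) hconst
        rw [eval_sub, heval0, hevalq0, sub_zero, eval_C] at this
        simp [← this]
      have := hconst
      rw [hc, map_zero, sub_eq_zero] at this
      exact this
    intro y
    have h := congrArg (eval y) hpq
    rw [evalp, evalq] at h
    rw [show n+1+1 = n+2 by omega]
    rw [h]
    push_cast
    ring


lemma sym (n : ℕ) (hn : 1 ≤ n) :
    ∑ k ∈ range (n+1), (n.choose k : ℚ) * ((k:ℚ)+1)^(k-1) * (((n-k : ℕ):ℚ)+1)^(n-k-1)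
      = 2 * ((n:ℚ)+2)^(n-1) := by
  have split : ∀ m : ℕ, ((m:ℚ)+1)^(m-1) = ((m:ℚ)+1)^m - (m:ℚ)*((m:ℚ)+1)^(m-1) := by
    intro m
    rcases Nat.eq_zero_or_pos m with rfl | hm
    · norm_num
    · have : ((m:ℚ)+1)^m = ((m:ℚ)+1)^(m-1) * ((m:ℚ)+1) := by
        rw [← pow_succ]; congr 1; omega
      rw [this]; ring
  have hsum : ∑ k ∈ range (n+1), (n.choose k : ℚ) * ((k:ℚ)+1)^(k-1) * (((n-k : ℕ):ℚ)+1)^(n-k-1)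
      = (∑ k ∈ range (n+1), (n.choose k : ℚ) * ((k:ℚ)+1)^(k-1) * ((1:ℚ) + ((n-k : ℕ):ℚ))^(n-k))
        - ∑ k ∈ range (n+1), (n.choose k : ℚ) * ((k:ℚ)+1)^(k-1) *
            (((n-k:ℕ):ℚ) * (((n-k : ℕ):ℚ)+1)^(n-k-1)) := by
    rw [← Finset.sum_sub_distrib]
    refine Finset.sum_congr rfl fun k _ => ?_
    linear_combination ((n.choose k : ℚ) * ((k:ℚ)+1)^(k-1)) * split (n-k)
  have h1 : ∑ k ∈ range (n+1), (n.choose k : ℚ) * ((k:ℚ)+1)^(k-1) * ((1:ℚ) + ((n-k : ℕ):ℚ))^(n-k)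
      = ((n:ℚ)+2)^n := by
    have := abel n 1
    rw [this]; ring
  have h2 : ∑ k ∈ range (n+1), (n.choose k : ℚ) * ((k:ℚ)+1)^(k-1) *
        (((n-k:ℕ):ℚ) * (((n-k : ℕ):ℚ)+1)^(n-k-1))
      = (n:ℚ) * ((n:ℚ)+2)^(n-1) := by
    obtain ⟨m, rfl⟩ : ∃ m, n = m + 1 := ⟨n-1, by omega⟩
    rw [Finset.sum_range_succ]
    simp only [Nat.sub_self, Nat.cast_zero, zero_mul, mul_zero, add_zero]
    have step : ∀ k ∈ range (m+1), ((m+1).choose k : ℚ) * ((k:ℚ)+1)^(k-1) *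
          (((m+1-k:ℕ):ℚ) * (((m+1-k : ℕ):ℚ)+1)^(m+1-k-1))
        = ((m+1:ℕ):ℚ) * ((m.choose k : ℚ) * ((k:ℚ)+1)^(k-1) * ((2:ℚ) + ((m-k : ℕ):ℚ))^(m-k)) := by
      intro k hk
      have hk' : k ≤ m := by simpa [Nat.lt_succ_iff] using hk
      have h3n : (m+1).choose k * (m+1-k) = m.choose k * (m+1) := (Nat.choose_mul_succ_eq m k).symm
      have h3 := congrArg (fun x : ℕ => (x : ℚ)) h3n
      push_cast at h3
      have e1 : ((m+1-k:ℕ):ℚ) = ((m-k:ℕ):ℚ) + 1 := by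
        rw [show m+1-k = (m-k)+1 by omega]; push_cast; ring
      have e2 : m+1-k-1 = m-k := by omega
      rw [e2, show ((2:ℚ) + ((m-k : ℕ):ℚ)) = (((m-k:ℕ):ℚ)+1) + 1 by ring]
      calc ((m+1).choose k : ℚ) * ((k:ℚ)+1)^(k-1) * (((m+1-k:ℕ):ℚ) * (((m+1-k : ℕ):ℚ)+1)^(m-k))
          = (((m+1).choose k : ℚ) * ((m+1-k:ℕ):ℚ)) * (((k:ℚ)+1)^(k-1) *
              (((m+1-k : ℕ):ℚ)+1)^(m-k)) := by ring
        _ = _ := by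
            rw [show (((m+1).choose k : ℚ)) * ((m+1-k:ℕ):ℚ) = ((m.choose k:ℚ)) * ((m:ℚ)+1) by
              rw [e1] at h3 ⊢; push_cast at h3 ⊢; linarith [h3]]
            rw [e1]
            push_cast
            ring
    rw [Finset.sum_congr rfl step, ← Finset.mul_sum, abel m 2]
    push_cast
    ring_nf
  rw [hsum, h1, h2]
  have expand : ((n:ℚ)+2)^n = ((n:ℚ)+2)^(n-1) * ((n:ℚ)+2) := by
    rw [← pow_succ]; congr 1; omega
  rw [expand]; ring

noncomputable section

def S (n : ℕ) : ℚ := ∑ T ∈ treesOfNumNodesEq n, hookProd (fun h => 1 + 1/(h:ℚ)) T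

def g (n : ℕ) : ℚ := 2^n * ((n:ℚ)+1)^(n-1) / n.factorial

lemma tree_sum (F : Tree Unit → ℚ) (n : ℕ) :
    ∑ T ∈ treesOfNumNodesEq (n+1), F T
    = ∑ ij ∈ Finset.HasAntidiagonal.antidiagonal n, ∑ l ∈ treesOfNumNodesEq ij.1, ∑ r ∈ treesOfNumNodesEq ij.2,
        F (BinaryTree.node () l r) := by
  rw [Tree.treesOfNumNodesEq, BinaryTree.treesOfNumNodesEq_succ, sum_biUnion]
  · refine sum_congr rfl fun ij _ => ?_
    rw [sum_map]
    simp [Finset.sum_product]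
    rfl
  · simp_rw [Set.PairwiseDisjoint, Set.Pairwise, Function.onFun, disjoint_left]
    rintro ⟨i, j⟩ _ ⟨i', j'⟩ _ h a ha ha'
    simp only [mem_coe, Finset.mem_map, Finset.mem_product] at ha ha'
    obtain ⟨⟨l, r⟩, ⟨hl, hr⟩, rfl⟩ := ha
    obtain ⟨⟨l', r'⟩, ⟨hl', hr'⟩, he⟩ := ha'
    change BinaryTree.node () l' r' = BinaryTree.node () l r at he
    simp only [Function.Embedding.coeFn_mk, BinaryTree.node.injEq] at he
    obtain ⟨-, rfl, rfl⟩ := he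
    exact h (by
      simp only [BinaryTree.mem_treesOfNumNodesEq] at hl hr hl' hr'
      ext <;> simp_all)

lemma S_zero : S 0 = 1 := by simp [S, hookProd]

lemma S_succ (n : ℕ) :
    S (n+1) = (1 + 1/((n:ℚ)+1)) * ∑ ij ∈ Finset.HasAntidiagonal.antidiagonal n, S ij.1 * S ij.2 := by
  rw [S, tree_sum, Finset.mul_sum]
  refine sum_congr rfl fun ij hij => ?_
  have hadd : ij.1 + ij.2 = n := Finset.HasAntidiagonal.mem_antidiagonal.mp hij
  rw [S, S, Finset.sum_mul_sum, Finset.mul_sum]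
  refine sum_congr rfl fun l hl => ?_
  rw [Finset.mul_sum]
  refine sum_congr rfl fun r hr => ?_
  have hl' : BinaryTree.numNodes l = ij.1 := BinaryTree.mem_treesOfNumNodesEq.mp hl
  have hr' : BinaryTree.numNodes r = ij.2 := BinaryTree.mem_treesOfNumNodesEq.mp hr
  show hookProd (fun h => 1 + 1/(h:ℚ)) (Tree.node () l r) = _
  rw [hookProd, hl', hr', hadd]
  push_cast
  ring

lemma conv (n : ℕ) (hn : 1 ≤ n) :
    ∑ ij ∈ Finset.HasAntidiagonal.antidiagonal n, g ij.1 * g ij.2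
      = 2^n / (n.factorial : ℚ) * (2 * ((n:ℚ)+2)^(n-1)) := by
  rw [Finset.Nat.sum_antidiagonal_eq_sum_range_succ_mk]
  rw [← sym n hn, Finset.mul_sum]
  refine sum_congr rfl fun k hk => ?_
  have hk' : k ≤ n := by simpa [Nat.lt_succ_iff] using hk
  have hcf : (n.choose k : ℚ) * (k.factorial : ℚ) * ((n-k).factorial : ℚ) = (n.factorial : ℚ) := by
    exact_mod_cast congrArg (fun m : ℕ => (m:ℚ)) (Nat.choose_mul_factorial_mul_factorial hk')
  have h2 : (2:ℚ)^k * (2:ℚ)^(n-k) = 2^n := by rw [← pow_add]; congr 1; omega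
  have hkf : (k.factorial : ℚ) ≠ 0 := Nat.cast_ne_zero.mpr k.factorial_ne_zero
  have hnkf : ((n-k).factorial : ℚ) ≠ 0 := Nat.cast_ne_zero.mpr (n-k).factorial_ne_zero
  have hnf : (n.factorial : ℚ) ≠ 0 := Nat.cast_ne_zero.mpr n.factorial_ne_zero
  show g k * g (n-k) = _
  rw [g, g]
  conv_rhs => rw [div_mul_eq_mul_div]
  rw [div_mul_div_comm, div_eq_div_iff (by exact mul_ne_zero hkf hnkf) hnf]
  calc 2^k * ((k:ℚ)+1)^(k-1) * (2^(n-k) * (((n-k:ℕ):ℚ)+1)^(n-k-1)) * (n.factorial:ℚ)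
      = (2^k * 2^(n-k)) * (((k:ℚ)+1)^(k-1) * (((n-k:ℕ):ℚ)+1)^(n-k-1)) * (n.factorial:ℚ) := by ring
    _ = 2^n * (((k:ℚ)+1)^(k-1) * (((n-k:ℕ):ℚ)+1)^(n-k-1))
          * ((n.choose k : ℚ) * (k.factorial : ℚ) * ((n-k).factorial : ℚ)) := by rw [h2, hcf]
    _ = _ := by ring

lemma S_eq_g : ∀ n, S n = g n := by
  intro n
  induction n using Nat.strong_induction_on with
  | _ n ih =>
    match n with
    | 0 => rw [S_zero]; simp [g]
    | 1 =>
      rw [S_succ 0]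
      simp [S_zero, g]
      norm_num
    | (m+2) =>
      have hn1 : 1 ≤ m + 1 := by omega
      rw [S_succ (m+1)]
      have hSg : ∑ ij ∈ Finset.HasAntidiagonal.antidiagonal (m+1), S ij.1 * S ij.2
          = ∑ ij ∈ Finset.HasAntidiagonal.antidiagonal (m+1), g ij.1 * g ij.2 := by
        refine sum_congr rfl fun ij hij => ?_
        have hadd : ij.1 + ij.2 = m+1 := Finset.HasAntidiagonal.mem_antidiagonal.mp hij
        have i1 : ij.1 < m + 2 := by omega
        have i2 : ij.2 < m + 2 := by omega
        rw [ih ij.1 i1, ih ij.2 i2]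
      rw [hSg, conv (m+1) hn1, g]
      have e1 : (m+1+1) - 1 = m+1 := by omega
      have e2 : (((m+1:ℕ):ℚ)+2)^(m+1) = (((m+1:ℕ):ℚ)+2)^(m+1-1) * (((m+1:ℕ):ℚ)+2) := by
        rw [← pow_succ]; congr 1; try omega
      have e3 : ((m+1+1).factorial : ℚ) = (((m+1:ℕ):ℚ)+1) * ((m+1).factorial : ℚ) := by
        rw [Nat.factorial_succ]; push_cast; ring
      have hnf : ((m+1).factorial : ℚ) ≠ 0 := Nat.cast_ne_zero.mpr (m+1).factorial_ne_zero
      have hn1q : (((m+1:ℕ):ℚ)+1) ≠ 0 := by positivity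
      have hc : ((m+1+1:ℕ):ℚ)+1 = ((m+1:ℕ):ℚ)+2 := by push_cast; ring
      rw [e1, e3, hc, e2]
      field_simp
      ring
end

theorem postnikov_formula (n : ℕ) (hn : 0 < n) :
    ∑ T ∈ Tree.treesOfNumNodesEq n,
      ((n.factorial : ℚ) / 2 ^ n) * hookProd (fun h => 1 + 1 / (h : ℚ)) T
      = (n + 1 : ℚ) ^ (n - 1) := by
  rw [← Finset.mul_sum, ← S, S_eq_g, g]
  have hnf : (n.factorial : ℚ) ≠ 0 := Nat.cast_ne_zero.mpr n.factorial_ne_zero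
  field_simp

end PostnikovAux
end

section
/- For every positive integer n, the sum over all binary trees T with n vertices of n! · Π_{v ∈ T} (1/h_v) equals n!; equivalently, the sum over all binary trees with n vertices of the product of the reciprocals of the hook lengths equals 1. -/
lemma hookProd_sum_eq_one : ∀ n : ℕ,
    ∑ T ∈ Tree.treesOfNumNodesEq n, hookProd (fun h => 1 / (h : ℚ)) T = 1 := by
  intro n
  induction n using Nat.strong_induction_on with
  | _ n ih =>
    cases n with
    | zero => simp [hookProd]
    | succ n =>
      rw [Tree.treesOfNumNodesEq, BinaryTree.treesOfNumNodesEq_succ, Finset.sum_biUnion]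
      · have : ∀ ij ∈ Finset.HasAntidiagonal.antidiagonal n,
            ∑ T ∈ BinaryTree.pairwiseNode (Tree.treesOfNumNodesEq ij.1)
              (Tree.treesOfNumNodesEq ij.2), hookProd (fun h => 1 / (h : ℚ)) T
            = 1 / ((n : ℚ) + 1) := by
          rintro ⟨i, j⟩ H
          rw [Finset.HasAntidiagonal.mem_antidiagonal] at H
          rw [Finset.sum_map, Finset.sum_product]
          have : ∀ l ∈ Tree.treesOfNumNodesEq i, ∀ r ∈ Tree.treesOfNumNodesEq j,
              hookProd (fun h => 1 / (h : ℚ)) (Tree.node () l r)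
              = 1 / ((n : ℚ) + 1) * (hookProd (fun h => 1 / (h : ℚ)) l
                * hookProd (fun h => 1 / (h : ℚ)) r) := by
            intro l hl r hr
            rw [BinaryTree.mem_treesOfNumNodesEq] at hl hr
            simp only [hookProd, hl, hr, H]
            push_cast
            ring
          calc ∑ l ∈ Tree.treesOfNumNodesEq i, ∑ r ∈ Tree.treesOfNumNodesEq j,
                hookProd (fun h => 1 / (h : ℚ)) (Tree.node () l r)
              = ∑ l ∈ Tree.treesOfNumNodesEq i, ∑ r ∈ Tree.treesOfNumNodesEq j,
                1 / ((n : ℚ) + 1) * (hookProd (fun h => 1 / (h : ℚ)) l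
                  * hookProd (fun h => 1 / (h : ℚ)) r) := by
                refine Finset.sum_congr rfl fun l hl => Finset.sum_congr rfl fun r hr => ?_
                exact this l hl r hr
            _ = 1 / ((n : ℚ) + 1) := by
                simp only [← Finset.mul_sum, ← Finset.sum_mul]
                rw [ih i (by omega), ih j (by omega)]
                ring
        rw [Finset.sum_congr rfl this, Finset.sum_const, Finset.Nat.card_antidiagonal, nsmul_eq_mul]
        field_simp
        norm_num
      · simp_rw [Set.PairwiseDisjoint, Set.Pairwise, Finset.disjoint_left]
        rintro ⟨i, j⟩ _ ⟨i', j'⟩ _ h a ha ha'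
        cases a with
        | nil => simp at ha
        | node v l r =>
          simp only [Finset.mem_map, Finset.mem_product, Function.Embedding.coeFn_mk,
            Prod.exists] at ha ha'
          obtain ⟨x, y, ⟨hx, hy⟩, hxy⟩ := ha
          obtain ⟨x', y', ⟨hx', hy'⟩, hxy'⟩ := ha'
          cases hxy; cases hxy'
          rw [BinaryTree.mem_treesOfNumNodesEq] at hx hy hx' hy'
          exact h (by simp_all [Prod.ext_iff])

theorem hook_length_formula (n : ℕ) (hn : 0 < n) :
    ∑ T ∈ Tree.treesOfNumNodesEq n,
      (n.factorial : ℚ) * hookProd (fun h => 1 / (h : ℚ)) T = (n.factorial : ℚ) := by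
  rw [← Finset.mul_sum, hookProd_sum_eq_one, mul_one]
end
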